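/- Let A be a π-torsion-free Noetherian O_K-algebra with A/πA reduced such that A[1/π] is normal. Then A = {x ∈ A[1/π] : |x|_A ≤ 1}, where |·|_A is the π-adic gauge norm; in particular every element of A[1/π] integral over A lies in A. -/

import Mathlib

/-- Let `A` be a `π`-torsion-free Noetherian `O_K`-algebra with `A/πA`
reduced such that `A[1/π]` is normal.  Then `A = {x ∈ A[1/π] : |x|_A ≤ 1}` (here
`|x|_A ≤ 1` means `0 ≤ v_A x`, with `v_A` the `π`-adic gauge valuation, encoded by
`(∃ a, x = π^n a) ↔ n ≤ v x`); in particular every element of `A[1/π]` integral over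
`A` lies in `A`. -/
theorem stmt_2
    {O : Type*} [CommRing O] [IsDomain O] [IsDiscreteValuationRing O]
    {A : Type*} [CommRing A] [IsNoetherianRing A] [Algebra O A]
    (π : O) (hπ : Irreducible π)
    (htorsionfree : ∀ a : A, algebraMap O A π * a = 0 → a = 0)
    (hreduced : IsReduced (A ⧸ Ideal.span {algebraMap O A π}))
    (L : Type*) [CommRing L] [Algebra A L]
    [IsLocalization.Away (algebraMap O A π) L]
    (hnormal : IsIntegrallyClosed L)
    (u : Lˣ) (hu : (u : L) = algebraMap A L (algebraMap O A π))
    (v : L → ℤ)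
    (hv : ∀ x : L, x ≠ 0 →
      ∀ n : ℤ, (∃ a : A, x = ((u ^ n : Lˣ) : L) * algebraMap A L a) ↔ n ≤ v x) :
    (∀ x : L, x ≠ 0 → ((0 ≤ v x) ↔ ∃ a : A, x = algebraMap A L a)) ∧
    (∀ x : L, IsIntegral A x → ∃ a : A, x = algebraMap A L a) := by
  set πA : A := algebraMap O A π with hπA
  set f : A →+* L := algebraMap A L with hf
  -- injectivity of A → L
  have hreg : πA ∈ nonZeroDivisors A := by
    refine ⟨fun a ha => htorsionfree a ha, ?_⟩
    intro a ha
    exact htorsionfree a (by rwa [mul_comm] at ha)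
  have hle : Submonoid.powers πA ≤ nonZeroDivisors A :=
    Submonoid.powers_le.mpr hreg
  have hinj : Function.Injective f := IsLocalization.injective L hle
  -- nonneg powers of u come from A
  have huz : ∀ e : ℤ, 0 ≤ e → ((u ^ e : Lˣ) : L) = f (πA ^ e.toNat) := by
    intro e he
    obtain ⟨m, rfl⟩ := Int.eq_ofNat_of_zero_le he
    simp only [Int.toNat_natCast, zpow_natCast, Units.val_pow_eq_pow_val, hu, ← map_pow]
  -- extremal representation
  have hext : ∀ x : L, x ≠ 0 →
      ∃ a : A, x = ((u ^ (v x) : Lˣ) : L) * f a ∧ ¬ πA ∣ a := by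
    intro x hx
    obtain ⟨a, ha⟩ := (hv x hx (v x)).mpr le_rfl
    refine ⟨a, ha, ?_⟩
    rintro ⟨b, rfl⟩
    have hb : ∃ c : A, x = ((u ^ (v x + 1) : Lˣ) : L) * f c := by
      refine ⟨b, ?_⟩
      conv_lhs => rw [ha]
      rw [map_mul, ← hu, zpow_add_one, Units.val_mul]
      ring
    exact absurd ((hv x hx (v x + 1)).mp hb) (by omega)
  -- powers: x^k = u^(k * v x) * f (a^k)
  have hzz : ∀ (k : ℕ) (e : ℤ), ((u ^ e : Lˣ) ^ k : Lˣ) = u ^ ((k : ℤ) * e) := by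
    intro k e
    rw [← zpow_natCast (u ^ e) k, ← zpow_mul, mul_comm]
  have hpow : ∀ x : L, x ≠ 0 → ∀ k : ℕ,
      x ^ k ≠ 0 ∧ v (x ^ k) ≤ (k : ℤ) * v x := by
    intro x hx k
    obtain ⟨a, ha, hnd⟩ := hext x hx
    have hnda : ¬ πA ∣ a ^ k := by
      intro hd
      apply hnd
      have h1 : (Ideal.Quotient.mk (Ideal.span {πA}) a) ^ k = 0 := by
        rw [← map_pow, Ideal.Quotient.eq_zero_iff_mem, Ideal.mem_span_singleton]
        exact hd
      have h2 := IsNilpotent.eq_zero (⟨k, h1⟩ : IsNilpotent _)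
      rwa [Ideal.Quotient.eq_zero_iff_mem, Ideal.mem_span_singleton] at h2
    have hxk : x ^ k = ((u ^ ((k : ℤ) * v x) : Lˣ) : L) * f (a ^ k) := by
      conv_lhs => rw [ha]
      rw [mul_pow, ← Units.val_pow_eq_pow_val, hzz, ← map_pow]
    have hxk0 : x ^ k ≠ 0 := by
      intro h0
      rw [h0] at hxk
      have : f (a ^ k) = 0 := by
        have := hxk.symm
        rwa [Units.mul_right_eq_zero] at this
      have : a ^ k = 0 := hinj (by simpa using this)
      exact hnda (this ▸ dvd_zero πA)
    refine ⟨hxk0, ?_⟩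
    by_contra hlt
    push_neg at hlt
    obtain ⟨b, hb⟩ := (hv (x ^ k) hxk0 ((k : ℤ) * v x + 1)).mpr (by omega)
    rw [hxk, zpow_add_one, Units.val_mul, mul_assoc] at hb
    have hb2 : f (a ^ k) = ↑u * f b := (u ^ ((k : ℤ) * v x)).isUnit.mul_left_cancel hb
    rw [hu, ← map_mul] at hb2
    exact hnda ⟨b, hinj hb2⟩
  constructor
  · intro x hx
    have h := hv x hx 0
    simp only [zpow_zero, Units.val_one, one_mul] at h
    exact h.symm
  · intro x hx
    by_cases hx0 : x = 0
    · exact ⟨0, by simp [hx0]⟩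
    obtain ⟨p, hmonic, hp⟩ := hx
    have hnt : Nontrivial L := nontrivial_of_ne x 0 hx0
    set n := p.natDegree with hn
    have hn1 : 1 ≤ n := by
      rcases Nat.eq_zero_or_pos n with h | h
      · exfalso
        have hpx : p = 1 := (Polynomial.Monic.natDegree_eq_zero hmonic).mp h
        rw [hpx] at hp
        simp at hp
      · exact h
    suffices h0 : 0 ≤ v x by
      obtain ⟨a, ha⟩ := (hv x hx0 0).mpr h0
      exact ⟨a, by simpa using ha⟩
    by_contra hneg
    push_neg at hneg
    obtain ⟨a, ha, hnd⟩ := hext x hx0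
    have hterm : ∀ i ∈ Finset.range n, p.coeff i • x ^ i =
        ((u ^ (((n : ℤ) - 1) * v x) : Lˣ) : L) *
          f (πA ^ ((((i : ℤ) - ((n : ℤ) - 1)) * v x).toNat) * (p.coeff i * a ^ i)) := by
      intro i hi
      have hi' : (i : ℤ) ≤ (n : ℤ) - 1 := by
        have := Finset.mem_range.mp hi; omega
      have he : 0 ≤ ((i : ℤ) - ((n : ℤ) - 1)) * v x := by nlinarith
      have hxi : x ^ i = ((u ^ ((i : ℤ) * v x) : Lˣ) : L) * f (a ^ i) := by
        conv_lhs => rw [ha]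
        rw [mul_pow, ← Units.val_pow_eq_pow_val, hzz, ← map_pow]
      have hsplit : ((u ^ ((i : ℤ) * v x) : Lˣ) : L) =
          ((u ^ (((n : ℤ) - 1) * v x) : Lˣ) : L) *
            ((u ^ ((((i : ℤ) - ((n : ℤ) - 1)) * v x)) : Lˣ) : L) := by
        rw [← Units.val_mul, ← zpow_add,
          show (((n : ℤ) - 1) * v x + ((i : ℤ) - ((n : ℤ) - 1)) * v x) = (i : ℤ) * v x by ring]
      rw [Algebra.smul_def, ← hf, hxi, hsplit, huz _ he, map_mul, map_mul]
      ring
    have haev : (Polynomial.aeval x) p = 0 := hp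
    rw [Polynomial.aeval_eq_sum_range, ← hn, Finset.sum_range_succ,
      hmonic.coeff_natDegree, one_smul] at haev
    have hxn : x ^ n = ((u ^ (((n : ℤ) - 1) * v x) : Lˣ) : L) *
        f (- ∑ i ∈ Finset.range n,
          πA ^ ((((i : ℤ) - ((n : ℤ) - 1)) * v x).toNat) * (p.coeff i * a ^ i)) := by
      have hx' : x ^ n = - ∑ i ∈ Finset.range n, p.coeff i • x ^ i := by
        linear_combination haev
      rw [hx', Finset.sum_congr rfl hterm, ← Finset.mul_sum, ← map_sum, map_neg, mul_neg]
    obtain ⟨hxn0, hvle⟩ := hpow x hx0 n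
    have hle1 : ((n : ℤ) - 1) * v x ≤ v (x ^ n) := (hv (x ^ n) hxn0 _).mp ⟨_, hxn⟩
    have hcomb : ((n : ℤ) - 1) * v x ≤ (n : ℤ) * v x := le_trans hle1 hvle
    have hexp : ((n : ℤ) - 1) * v x = (n : ℤ) * v x - v x := by ring
    linarith
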